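/- For the 1-D Gaussian mixture (label -1 with probability p, x ~ N(γ₁,σ₁²); label +1 with probability 1-p, x ~ N(γ₂,σ₂²)), the population hinge loss of the linear classifier h_{w,b} with w ∈ {-1,1} is differentiable in b, and its derivative with respect to b equals p·Φ((b + w·γ₁ + 1)/σ₁) − (1−p)·Φ((−b − w·γ₂ + 1)/σ₂). -/

import Mathlib

open MeasureTheory ProbabilityTheory

/-- CDF of the standard normal distribution `N(0,1)`. -/
noncomputable def Phi (x : ℝ) : ℝ := ((gaussianReal 0 1) (Set.Iic x)).toReal

/-- The 1-D Gaussian mixture: with probability `p`, label `-1` and `x ~ N(γ₁, σ₁²)`;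
with probability `1 - p`, label `+1` and `x ~ N(γ₂, σ₂²)`. -/
noncomputable def gaussMix (p γ₁ σ₁ γ₂ σ₂ : ℝ) : Measure (ℝ × ℝ) :=
  ENNReal.ofReal p • ((gaussianReal γ₁ (Real.toNNReal (σ₁ ^ 2))).map (fun x => (x, -1))) +
  ENNReal.ofReal (1 - p) • ((gaussianReal γ₂ (Real.toNNReal (σ₂ ^ 2))).map (fun x => (x, 1)))

/-- Population hinge loss (λ = 0) of the linear classifier `h_{w,b}` under `μ`. -/
noncomputable def hingeLoss (w b : ℝ) (μ : Measure (ℝ × ℝ)) : ℝ :=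
  ∫ z, max 0 (1 - z.2 * (w * z.1 + b)) ∂μ

open Set Real Filter
open scoped NNReal ENNReal Topology

lemma gauss_noAtoms' {m : ℝ} {v : ℝ≥0} (hv : v ≠ 0) : NullSingletonClass (gaussianReal m v) :=
  ⟨fun x => (gaussianReal_absolutelyContinuous m hv) (measure_singleton x)⟩

lemma Phi_neg (x : ℝ) : Phi (-x) = 1 - Phi x := by
  have hmap : (gaussianReal 0 1).map (fun y => (-1 : ℝ) * y) = gaussianReal 0 1 := by
    rw [gaussianReal_map_const_mul]
    congr 1
    · ring
    · ext; norm_num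
  have h1 : (gaussianReal 0 1) (Set.Iic (-x)) = (gaussianReal 0 1) (Set.Ici x) := by
    conv_lhs => rw [← hmap]
    rw [Measure.map_apply (by fun_prop) measurableSet_Iic]
    congr 1
    ext y
    simp only [Set.mem_preimage, Set.mem_Iic, Set.mem_Ici]
    constructor <;> intro h <;> linarith
  have : NullSingletonClass (gaussianReal (0:ℝ) (1:ℝ≥0)) := gauss_noAtoms' one_ne_zero
  have h2 : (gaussianReal 0 1) (Set.Ici x) = 1 - (gaussianReal 0 1) (Set.Iic x) := by
    rw [show Set.Ici x = (Set.Iio x)ᶜ by simp, measure_compl measurableSet_Iio (measure_ne_top _ _),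
      measure_univ, measure_congr (Iio_ae_eq_Iic)]
  rw [Phi, Phi, h1, h2, ENNReal.toReal_sub_of_le (prob_le_one) (by simp), ENNReal.toReal_one]

lemma gauss_eq_map (m σ : ℝ) :
    gaussianReal m (Real.toNNReal (σ^2)) = (gaussianReal 0 1).map (fun x => σ * x + m) := by
  have h1 : (gaussianReal (0:ℝ) 1).map (fun x => σ * x) = gaussianReal 0 (NNReal.mk (σ^2) (sq_nonneg _)) :=
    by simpa using gaussianReal_map_const_mul (μ := 0) (v := 1) σ
  have h2 : NNReal.mk (σ^2) (sq_nonneg σ) = Real.toNNReal (σ^2) := by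
    ext; simp [Real.toNNReal, max_eq_left (sq_nonneg σ)]
  have h3 : (fun x : ℝ => σ * x + m) = (fun x => x + m) ∘ (fun x => σ * x) := rfl
  rw [h3, ← Measure.map_map (by fun_prop) (by fun_prop), h1, h2,
    gaussianReal_map_add_const, zero_add]

lemma gauss_Iic (m σ : ℝ) (hσ : 0 < σ) (t : ℝ) :
    ((gaussianReal m (Real.toNNReal (σ^2))) (Set.Iic t)).toReal = Phi ((t - m)/σ) := by
  rw [gauss_eq_map m σ, Measure.map_apply (by fun_prop) measurableSet_Iic, Phi]
  congr 2
  ext x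
  simp only [Set.mem_preimage, Set.mem_Iic]
  rw [le_div_iff₀ hσ]
  constructor <;> intro h <;> nlinarith

lemma gauss_Iio (m σ : ℝ) (hσ : 0 < σ) (t : ℝ) :
    ((gaussianReal m (Real.toNNReal (σ^2))) (Set.Iio t)).toReal = Phi ((t - m)/σ) := by
  have : NullSingletonClass (gaussianReal m (Real.toNNReal (σ^2))) := by
    refine gauss_noAtoms' ?_
    simp only [ne_eq, Real.toNNReal_eq_zero, not_le]
    positivity
  rw [measure_congr (Iio_ae_eq_Iic), gauss_Iic m σ hσ]

lemma gauss_Ioi (m σ : ℝ) (hσ : 0 < σ) (t : ℝ) :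
    ((gaussianReal m (Real.toNNReal (σ^2))) (Set.Ioi t)).toReal = Phi ((m - t)/σ) := by
  have h : (m - t)/σ = -((t - m)/σ) := by ring
  rw [h, Phi_neg, ← gauss_Iic m σ hσ]
  rw [show Set.Ioi t = (Set.Iic t)ᶜ by simp,
    measure_compl measurableSet_Iic (measure_ne_top _ _), measure_univ,
    ENNReal.toReal_sub_of_le (prob_le_one) (by simp), ENNReal.toReal_one]
lemma integrable_id_gauss (m : ℝ) (v : ℝ≥0) : Integrable (fun x => x) (gaussianReal m v) := by
  by_cases hv : v = 0
  · rw [hv, gaussianReal_zero_var]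
    refine ⟨aestronglyMeasurable_id, ?_⟩
    rw [HasFiniteIntegral, lintegral_dirac' _ (by fun_prop)]
    exact ENNReal.coe_lt_top
  · rw [gaussianReal_of_var_ne_zero _ hv]
    rw [integrable_withDensity_iff (measurable_gaussianPDF _ _)
      (ae_of_all _ fun x => ENNReal.ofReal_lt_top)]
    have hb : (0:ℝ) < (2 * (v:ℝ))⁻¹ := by positivity
    have h1 : Integrable (fun x : ℝ => (x + m) * ((√(2 * π * v))⁻¹ * rexp (-(2 * (v:ℝ))⁻¹ * x ^ 2))) volume := by
      have h2 := integrable_mul_exp_neg_mul_sq hb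
      have h3 := integrable_exp_neg_mul_sq hb
      have := (h2.add (h3.const_mul m)).const_mul (√(2 * π * v))⁻¹
      refine this.congr ?_
      filter_upwards with x
      simp only [Pi.add_apply]
      ring
    have := h1.comp_sub_right m
    refine this.congr ?_
    filter_upwards with x
    rw [gaussianPDF, ENNReal.toReal_ofReal (gaussianPDFReal_nonneg _ _ _)]
    simp only [gaussianPDFReal]
    have hv' : (0:ℝ) < v := by positivity
    rw [sub_add_cancel]
    congr 2
    field_simp
lemma lips_max : LipschitzWith 1 (fun u : ℝ => max 0 u) := by
  apply LipschitzWith.of_dist_le_mul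
  intro a c
  rw [Real.dist_eq, Real.dist_eq, NNReal.coe_one, one_mul, max_comm 0 a, max_comm 0 c]
  exact abs_max_sub_max_le_abs a c 0

lemma deriv_term (m : ℝ) (v : ℝ≥0) (hv : v ≠ 0) (w s b : ℝ) (hw : w ≠ 0)
    (hs : s = 1 ∨ s = -1) :
    HasDerivAt (fun b' => ∫ x, max 0 (1 + s * (w * x + b')) ∂(gaussianReal m v))
      (s * ((gaussianReal m v) {x | 0 < 1 + s * (w * x + b)}).toReal) b := by
  set ν := gaussianReal m v with hν
  have habs : |s| = 1 := by rcases hs with h | h <;> simp [h]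
  have hS : MeasurableSet {x : ℝ | 0 < 1 + s * (w * x + b)} :=
    measurableSet_lt measurable_const (by fun_prop)
  have key := hasDerivAt_integral_of_dominated_loc_of_lip
    (F := fun b' x => max 0 (1 + s * (w * x + b')))
    (F' := fun x => Set.indicator {x : ℝ | 0 < 1 + s * (w * x + b)} (fun _ => s) x)
    (x₀ := b) (bound := fun _ => (1:ℝ)) (μ := ν) (s := Metric.ball b 1) (Metric.ball_mem_nhds b one_pos)
    (Filter.Eventually.of_forall fun b' =>
      (Continuous.aestronglyMeasurable (by fun_prop)))
    ?hint ?hmeas ?hlip ((integrable_const 1)) ?hdiff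
  case hint =>
    refine Integrable.mono' (g := fun x => (1 + |s * b|) + |s * w| * |x|)
      (((integrable_const _).add (((integrable_id_gauss m v).abs.const_mul _))))
      (Continuous.aestronglyMeasurable (by fun_prop)) ?_
    filter_upwards with x
    rw [Real.norm_eq_abs]
    have h1 : |max 0 (1 + s * (w * x + b))| ≤ |1 + s * (w * x + b)| := by
      rw [abs_le]
      constructor
      · exact le_trans (neg_abs_le _) (by simp [le_max_iff, abs_nonneg])
      · exact max_le (abs_nonneg _) (le_abs_self _)
    refine h1.trans ?_
    have : 1 + s * (w * x + b) = (1 + s * b) + s * w * x := by ring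
    rw [this]
    calc |(1 + s * b) + s * w * x| ≤ |1 + s * b| + |s * w * x| := abs_add_le _ _
      _ ≤ (1 + |s * b|) + |s * w| * |x| := by
          rw [abs_mul]
          gcongr
          exact (abs_add_le _ _).trans (by simp)
  case hmeas =>
    exact ((measurable_const.indicator hS)).aestronglyMeasurable
  case hlip =>
    filter_upwards with x
    have hinner : LipschitzWith 1 (fun b' : ℝ => 1 + s * (w * x + b')) := by
      apply LipschitzWith.of_dist_le_mul
      intro a c
      rw [Real.dist_eq, Real.dist_eq, NNReal.coe_one, one_mul,
        show (1 + s * (w * x + a)) - (1 + s * (w * x + c)) = s * (a - c) by ring,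
        abs_mul, habs, one_mul]
    have := lips_max.comp hinner
    rw [one_mul] at this
    have h1 : Real.nnabs (1:ℝ) = 1 := by simp
    rw [h1]
    exact (this.lipschitzOnWith (s := Metric.ball b 1))
  case hdiff =>
    have hnull : ν {x : ℝ | 1 + s * (w * x + b) = 0} = 0 := by
      have hsub : {x : ℝ | 1 + s * (w * x + b) = 0} ⊆ {-(s + b) / w} := by
        intro x hx
        simp only [Set.mem_setOf_eq] at hx
        simp only [Set.mem_singleton_iff]
        rcases hs with h | h <;> subst h <;> field_simp <;> linarith
      have : NullSingletonClass ν := gauss_noAtoms' hv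
      exact measure_mono_null hsub (measure_singleton _)
    have hae : ∀ᵐ x ∂ν, 1 + s * (w * x + b) ≠ 0 := by
      rw [ae_iff]
      simpa using hnull
    filter_upwards [hae] with x hx
    rcases hx.lt_or_gt with hneg | hpos
    · have h0 : x ∉ {x : ℝ | 0 < 1 + s * (w * x + b)} := by
        simp only [Set.mem_setOf_eq, not_lt]
        linarith
      rw [Set.indicator_of_notMem h0]
      have hev : ∀ᶠ b' in 𝓝 b, 1 + s * (w * x + b') < 0 :=
        (Continuous.continuousAt (f := fun b' : ℝ => 1 + s * (w * x + b')) (by fun_prop)).eventually_mem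
          (Iio_mem_nhds hneg)
      refine HasDerivAt.congr_of_eventuallyEq (hasDerivAt_const b 0) ?_
      filter_upwards [hev] with b' hb'
      exact max_eq_left hb'.le
    · have hmem : x ∈ {y : ℝ | 0 < 1 + s * (w * y + b)} := hpos
      rw [Set.indicator_of_mem hmem]
      have hd : HasDerivAt (fun b' : ℝ => 1 + s * (w * x + b')) s b := by
        simpa using (((hasDerivAt_id b).const_add (w * x)).const_mul s).const_add 1
      have hev : ∀ᶠ b' in 𝓝 b, 0 < 1 + s * (w * x + b') :=
        (Continuous.continuousAt (f := fun b' : ℝ => 1 + s * (w * x + b')) (by fun_prop)).eventually_mem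
          (Ioi_mem_nhds hpos)
      refine HasDerivAt.congr_of_eventuallyEq hd ?_
      filter_upwards [hev] with b' hb'
      exact max_eq_right hb'.le
  refine key.2.congr_deriv ?_
  rw [integral_indicator hS, setIntegral_const, smul_eq_mul, mul_comm, measureReal_def]
lemma integrable_term (m : ℝ) (v : ℝ≥0) (s w b' : ℝ) :
    Integrable (fun x => max 0 (1 + s * (w * x + b'))) (gaussianReal m v) := by
  refine Integrable.mono' (g := fun x => (1 + |s * b'|) + |s * w| * |x|)
    (((integrable_const _).add (((integrable_id_gauss m v).abs.const_mul _))))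
    (Continuous.aestronglyMeasurable (by fun_prop)) ?_
  filter_upwards with x
  rw [Real.norm_eq_abs]
  have h1 : |max 0 (1 + s * (w * x + b'))| ≤ |1 + s * (w * x + b')| := by
    rw [abs_le]
    exact ⟨le_trans (neg_abs_le _) (by simp [le_max_iff, abs_nonneg]),
      max_le (abs_nonneg _) (le_abs_self _)⟩
  refine h1.trans ?_
  rw [show 1 + s * (w * x + b') = (1 + s * b') + s * w * x by ring]
  calc |(1 + s * b') + s * w * x| ≤ |1 + s * b'| + |s * w * x| := abs_add_le _ _
    _ ≤ (1 + |s * b'|) + |s * w| * |x| := by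
        rw [abs_mul]
        gcongr
        exact (abs_add_le _ _).trans (by simp)

lemma hinge_decomp (p γ₁ σ₁ γ₂ σ₂ w : ℝ) (hp0 : 0 ≤ p) (hp1 : p ≤ 1) (b' : ℝ) :
    hingeLoss w b' (gaussMix p γ₁ σ₁ γ₂ σ₂) =
      p * ∫ x, max 0 (1 + 1 * (w * x + b')) ∂(gaussianReal γ₁ (Real.toNNReal (σ₁ ^ 2))) +
      (1 - p) * ∫ x, max 0 (1 + (-1) * (w * x + b')) ∂(gaussianReal γ₂ (Real.toNNReal (σ₂ ^ 2))) := by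
  set f : ℝ × ℝ → ℝ := fun z => max 0 (1 - z.2 * (w * z.1 + b')) with hf
  have hfc : Continuous f := by fun_prop
  set ν₁ := gaussianReal γ₁ (Real.toNNReal (σ₁ ^ 2))
  set ν₂ := gaussianReal γ₂ (Real.toNNReal (σ₂ ^ 2))
  have hg₁ : Measurable (fun x : ℝ => (x, (-1 : ℝ))) := by fun_prop
  have hg₂ : Measurable (fun x : ℝ => (x, (1 : ℝ))) := by fun_prop
  have hcomp₁ : (fun x : ℝ => f (x, -1)) = fun x => max 0 (1 + 1 * (w * x + b')) := by
    funext x; simp only [hf]; ring_nf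
  have hcomp₂ : (fun x : ℝ => f (x, 1)) = fun x => max 0 (1 + (-1) * (w * x + b')) := by
    funext x; simp only [hf]; ring_nf
  have hint₁ : Integrable f (ν₁.map (fun x => (x, -1))) := by
    rw [integrable_map_measure hfc.aestronglyMeasurable hg₁.aemeasurable]
    rw [show (f ∘ fun x : ℝ => (x, (-1:ℝ))) = fun x : ℝ => f (x, -1) from rfl, hcomp₁]
    exact integrable_term _ _ _ _ _
  have hint₂ : Integrable f (ν₂.map (fun x => (x, 1))) := by
    rw [integrable_map_measure hfc.aestronglyMeasurable hg₂.aemeasurable]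
    rw [show (f ∘ fun x : ℝ => (x, (1:ℝ))) = fun x : ℝ => f (x, 1) from rfl, hcomp₂]
    exact integrable_term _ _ _ _ _
  rw [hingeLoss, gaussMix]
  rw [integral_add_measure (hint₁.smul_measure ENNReal.ofReal_ne_top)
    (hint₂.smul_measure ENNReal.ofReal_ne_top)]
  rw [integral_smul_measure, integral_smul_measure,
    integral_map hg₁.aemeasurable hfc.aestronglyMeasurable,
    integral_map hg₂.aemeasurable hfc.aestronglyMeasurable,
    ENNReal.toReal_ofReal hp0, ENNReal.toReal_ofReal (by linarith : (0:ℝ) ≤ 1 - p)]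
  simp only [smul_eq_mul]
  rw [hcomp₁, hcomp₂]
lemma measure_set_term₁ (m σ w b : ℝ) (hσ : 0 < σ) (hw : w = -1 ∨ w = 1) :
    ((gaussianReal m (Real.toNNReal (σ^2))) {x | 0 < 1 + 1 * (w * x + b)}).toReal
      = Phi ((b + w * m + 1) / σ) := by
  rcases hw with h | h <;> subst h
  · have hset : {x : ℝ | 0 < 1 + 1 * (-1 * x + b)} = Set.Iio (1 + b) := by
      ext x; simp only [Set.mem_setOf_eq, Set.mem_Iio]; constructor <;> intro <;> linarith
    rw [hset, gauss_Iio m σ hσ]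
    congr 1; ring
  · have hset : {x : ℝ | 0 < 1 + 1 * (1 * x + b)} = Set.Ioi (-(1 + b)) := by
      ext x; simp only [Set.mem_setOf_eq, Set.mem_Ioi]; constructor <;> intro <;> linarith
    rw [hset, gauss_Ioi m σ hσ]
    congr 1; ring

lemma measure_set_term₂ (m σ w b : ℝ) (hσ : 0 < σ) (hw : w = -1 ∨ w = 1) :
    ((gaussianReal m (Real.toNNReal (σ^2))) {x | 0 < 1 + (-1) * (w * x + b)}).toReal
      = Phi ((-b - w * m + 1) / σ) := by
  rcases hw with h | h <;> subst h
  · have hset : {x : ℝ | 0 < 1 + (-1) * (-1 * x + b)} = Set.Ioi (b - 1) := by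
      ext x; simp only [Set.mem_setOf_eq, Set.mem_Ioi]; constructor <;> intro <;> linarith
    rw [hset, gauss_Ioi m σ hσ]
    congr 1; ring
  · have hset : {x : ℝ | 0 < 1 + (-1) * (1 * x + b)} = Set.Iio (1 - b) := by
      ext x; simp only [Set.mem_setOf_eq, Set.mem_Iio]; constructor <;> intro <;> linarith
    rw [hset, gauss_Iio m σ hσ]
    congr 1; ring
theorem stmt1 (p γ₁ σ₁ γ₂ σ₂ w : ℝ) (hp0 : 0 ≤ p) (hp1 : p ≤ 1)
    (hσ₁ : 0 < σ₁) (hσ₂ : 0 < σ₂) (hw : w = -1 ∨ w = 1) (b : ℝ) :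
    HasDerivAt (fun b' => hingeLoss w b' (gaussMix p γ₁ σ₁ γ₂ σ₂))
      (p * Phi ((b + w * γ₁ + 1) / σ₁) - (1 - p) * Phi ((-b - w * γ₂ + 1) / σ₂)) b := by
  have hw_ne : w ≠ 0 := by rcases hw with h | h <;> simp [h]
  have hv₁ : Real.toNNReal (σ₁ ^ 2) ≠ 0 := by
    simp only [ne_eq, Real.toNNReal_eq_zero, not_le]; positivity
  have hv₂ : Real.toNNReal (σ₂ ^ 2) ≠ 0 := by
    simp only [ne_eq, Real.toNNReal_eq_zero, not_le]; positivity
  have h1 := deriv_term γ₁ (Real.toNNReal (σ₁ ^ 2)) hv₁ w 1 b hw_ne (Or.inl rfl)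
  have h2 := deriv_term γ₂ (Real.toNNReal (σ₂ ^ 2)) hv₂ w (-1) b hw_ne (Or.inr rfl)
  have heq : (fun b' => hingeLoss w b' (gaussMix p γ₁ σ₁ γ₂ σ₂)) =
      fun b' => p * (∫ x, max 0 (1 + 1 * (w * x + b')) ∂(gaussianReal γ₁ (Real.toNNReal (σ₁ ^ 2)))) +
        (1 - p) * (∫ x, max 0 (1 + (-1) * (w * x + b')) ∂(gaussianReal γ₂ (Real.toNNReal (σ₂ ^ 2)))) :=
    funext fun b' => hinge_decomp p γ₁ σ₁ γ₂ σ₂ w hp0 hp1 b'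
  rw [heq]
  have hcomb := (h1.const_mul p).add (h2.const_mul (1 - p))
  refine hcomb.congr_deriv ?_
  rw [measure_set_term₁ γ₁ σ₁ w b hσ₁ hw, measure_set_term₂ γ₂ σ₂ w b hσ₂ hw]
  ring
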